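/- Let ũ_n : I_n → ℝ_{≥0} be concave functions with I_n → (−1/2, 1/2) (endpoints converging), all bounded above by a constant R, and with π∫_{I_n} ũ_n² = π for all n. Then the sequence of convex bodies of revolution generated by ũ_n has a subsequence converging in the Hausdorff metric to a convex body with nonempty interior (in particular the limit is not a segment). -/

import Mathlib

open Filter intervalIntegral

section AuxRescaledBodies
open Metric Set

-- Cauchy-Schwarz style sqrt combination
lemma aux_sqrt_comb (y1 z1 y2 z2 a b : ℝ) (ha : 0 ≤ a) (hb : 0 ≤ b) :
    Real.sqrt ((a*y1+b*y2)^2 + (a*z1+b*z2)^2)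
      ≤ a * Real.sqrt (y1^2+z1^2) + b * Real.sqrt (y2^2+z2^2) := by
  have h1 := Real.sq_sqrt (by positivity : (0:ℝ) ≤ y1^2+z1^2)
  have h2 := Real.sq_sqrt (by positivity : (0:ℝ) ≤ y2^2+z2^2)
  have n1 := Real.sqrt_nonneg (y1^2+z1^2)
  have n2 := Real.sqrt_nonneg (y2^2+z2^2)
  have CS : y1*y2+z1*z2 ≤ Real.sqrt (y1^2+z1^2) * Real.sqrt (y2^2+z2^2) := by
    nlinarith [sq_nonneg (y1*z2 - z1*y2), mul_nonneg n1 n2, sq_nonneg (y1*y2+z1*z2 - Real.sqrt (y1^2+z1^2) * Real.sqrt (y2^2+z2^2))]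
  have : (a*y1+b*y2)^2 + (a*z1+b*z2)^2 ≤ (a * Real.sqrt (y1^2+z1^2) + b * Real.sqrt (y2^2+z2^2))^2 := by
    have hab := mul_le_mul_of_nonneg_left CS (by positivity : (0:ℝ) ≤ 2*(a*b))
    have e1 : a^2 * (Real.sqrt (y1^2+z1^2))^2 = a^2*(y1^2+z1^2) := by rw [h1]
    have e2 : b^2 * (Real.sqrt (y2^2+z2^2))^2 = b^2*(y2^2+z2^2) := by rw [h2]
    nlinarith [hab, e1, e2]
  calc Real.sqrt ((a*y1+b*y2)^2 + (a*z1+b*z2)^2)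
      ≤ Real.sqrt ((a * Real.sqrt (y1^2+z1^2) + b * Real.sqrt (y2^2+z2^2))^2) :=
        Real.sqrt_le_sqrt this
    _ = a * Real.sqrt (y1^2+z1^2) + b * Real.sqrt (y2^2+z2^2) :=
        Real.sqrt_sq (by positivity)

lemma aux_interp {u : ℝ → ℝ} {a b p q : ℝ}
    (hconc : ConcaveOn ℝ (Set.Icc a b) u)
    (hp : p ∈ Set.Icc a b) (hq : q ∈ Set.Icc a b)
    (hup : 7/10 ≤ u p) (huq : 0 ≤ u q) (hpq : 9/20 ≤ |q - p|)
    {x : ℝ} (hx : |x - (p+q)/2| ≤ 1/10) :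
    x ∈ Set.Icc a b ∧ 3/20 ≤ u x := by
  have hne : q - p ≠ 0 := by
    intro h; rw [h] at hpq; simp at hpq; linarith
  set t : ℝ := (q - x)/(q - p) with ht
  have hxabs := abs_le.1 hx
  have h5 : (5:ℝ)/18 ≤ t ∧ t ≤ 1 := by
    rcases abs_cases (q - p) with ⟨he, hpos⟩ | ⟨he, hneg⟩
    · have h1 : 9/20 ≤ q - p := by rw [he] at hpq; exact hpq
      constructor
      · rw [ht, le_div_iff₀ (by linarith : (0:ℝ) < q - p)]
        linarith
      · rw [ht, div_le_one (by linarith : (0:ℝ) < q - p)]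
        linarith
    · have h1 : 9/20 ≤ p - q := by rw [he] at hpq; linarith
      have htalt : t = (x - q)/(p - q) := by
        rw [ht, ← neg_sub x q, ← neg_sub p q, neg_div_neg_eq]
      constructor
      · rw [htalt, le_div_iff₀ (by linarith : (0:ℝ) < p - q)]
        linarith
      · rw [htalt, div_le_one (by linarith : (0:ℝ) < p - q)]
        linarith
  obtain ⟨ht1, ht2⟩ := h5
  have h0 : (0:ℝ) ≤ t := by linarith
  have h0' : (0:ℝ) ≤ 1 - t := by linarith
  have hsum : t + (1 - t) = 1 := by ring
  have hx_comb : x = t * p + (1-t) * q := by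
    rw [ht, div_mul_eq_mul_div, one_sub_div hne, div_mul_eq_mul_div, ← add_div, eq_div_iff hne]; ring
  have hxm : x ∈ Set.Icc a b := by
    have := convex_Icc a b hp hq h0 h0' hsum
    rwa [smul_eq_mul, smul_eq_mul, ← hx_comb] at this
  refine ⟨hxm, ?_⟩
  have hcc := hconc.2 hp hq h0 h0' hsum
  rw [smul_eq_mul, smul_eq_mul, smul_eq_mul, smul_eq_mul, ← hx_comb] at hcc
  nlinarith [hcc, mul_nonneg h0' huq]

lemma aux_peak {cn dn : ℝ} {u : ℝ → ℝ} (hcd : cn < dn) (hlen : dn - cn ≤ 11/10)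
    (hcont : ContinuousOn u (Set.Icc cn dn)) (hnn : ∀ x ∈ Set.Icc cn dn, 0 ≤ u x)
    (hint : ∫ x in cn..dn, u x ^ 2 = 1) : ∃ x ∈ Set.Icc cn dn, 7/10 ≤ u x := by
  by_contra h
  push_neg at h
  have hInt : IntervalIntegrable (fun x => u x ^ 2) MeasureTheory.volume cn dn :=
    by
    apply ContinuousOn.intervalIntegrable
    rw [Set.uIcc_of_le hcd.le]
    exact hcont.pow 2
  have hle : ∫ x in cn..dn, u x ^ 2 ≤ ∫ _x in cn..dn, (49/100 : ℝ) :=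
    integral_mono_on hcd.le hInt intervalIntegrable_const
      (fun x hx => by nlinarith [h x hx, hnn x hx])
  rw [integral_const, smul_eq_mul] at hle
  nlinarith

lemma aux_body_convex {cn dn : ℝ} {u : ℝ → ℝ}
    (hconc : ConcaveOn ℝ (Set.Icc cn dn) u) :
    Convex ℝ {p : ℝ × ℝ × ℝ | p.1 ∈ Set.Icc cn dn ∧
      Real.sqrt (p.2.1 ^ 2 + p.2.2 ^ 2) ≤ u p.1} := by
  rintro ⟨x1, y1, z1⟩ ⟨hx1, hs1⟩ ⟨x2, y2, z2⟩ ⟨hx2, hs2⟩ a b ha hb hab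
  have hmem : a * x1 + b * x2 ∈ Set.Icc cn dn := by
    have := convex_Icc cn dn hx1 hx2 ha hb hab
    rwa [smul_eq_mul, smul_eq_mul] at this
  refine ⟨hmem, ?_⟩
  have hcc := hconc.2 hx1 hx2 ha hb hab
  rw [smul_eq_mul, smul_eq_mul, smul_eq_mul, smul_eq_mul] at hcc
  have h1 := aux_sqrt_comb y1 z1 y2 z2 a b ha hb
  have h2 : a * Real.sqrt (y1^2+z1^2) + b * Real.sqrt (y2^2+z2^2)
      ≤ a * u x1 + b * u x2 := by
    have := mul_le_mul_of_nonneg_left hs1 ha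
    have := mul_le_mul_of_nonneg_left hs2 hb
    dsimp at *; linarith
  simp only [Prod.smul_mk, Prod.mk_add_mk, smul_eq_mul]
  exact le_trans (le_trans h1 h2) hcc

lemma aux_body_subset {cn dn R : ℝ} {u : ℝ → ℝ}
    (hc : -1 ≤ cn) (hd : dn ≤ 1) (hR : 0 ≤ R)
    (hub : ∀ x ∈ Set.Icc cn dn, u x ≤ R) :
    {p : ℝ × ℝ × ℝ | p.1 ∈ Set.Icc cn dn ∧
      Real.sqrt (p.2.1 ^ 2 + p.2.2 ^ 2) ≤ u p.1} ⊆ Metric.closedBall 0 (1 + R) := by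
  rintro ⟨x, y, z⟩ ⟨hx, hs⟩
  have hux : u x ≤ R := hub x hx
  have hy : |y| ≤ R := by
    have h1 : Real.sqrt (y^2) ≤ Real.sqrt (y^2+z^2) := Real.sqrt_le_sqrt (by nlinarith)
    rw [Real.sqrt_sq_eq_abs] at h1
    linarith
  have hz : |z| ≤ R := by
    have h1 : Real.sqrt (z^2) ≤ Real.sqrt (y^2+z^2) := Real.sqrt_le_sqrt (by nlinarith)
    rw [Real.sqrt_sq_eq_abs] at h1
    linarith
  have hxa : |x| ≤ 1 := by
    rw [abs_le]; exact ⟨le_trans hc hx.1, le_trans hx.2 hd⟩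
  rw [Metric.mem_closedBall]
  rw [Prod.dist_eq, Prod.dist_eq]
  simp only [Prod.fst_zero, Prod.snd_zero, Real.dist_eq, sub_zero]
  refine max_le (by linarith) (max_le (by linarith) (by linarith))

lemma aux_body_compact {cn dn R : ℝ} {u : ℝ → ℝ}
    (hcd : cn ≤ dn) (hc : -1 ≤ cn) (hd : dn ≤ 1) (hR : 0 ≤ R)
    (hcont : ContinuousOn u (Set.Icc cn dn))
    (hub : ∀ x ∈ Set.Icc cn dn, u x ≤ R) :
    IsCompact {p : ℝ × ℝ × ℝ | p.1 ∈ Set.Icc cn dn ∧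
      Real.sqrt (p.2.1 ^ 2 + p.2.2 ^ 2) ≤ u p.1} := by
  set v : ℝ → ℝ := fun x => u (max cn (min dn x)) with hv
  have hvc : Continuous v := by
    apply hcont.comp_continuous
    · exact continuous_const.max (continuous_const.min continuous_id)
    · intro x
      exact ⟨le_max_left _ _, max_le hcd (min_le_left _ _)⟩
  have heq : {p : ℝ × ℝ × ℝ | p.1 ∈ Set.Icc cn dn ∧
      Real.sqrt (p.2.1 ^ 2 + p.2.2 ^ 2) ≤ u p.1}
      = {p : ℝ × ℝ × ℝ | p.1 ∈ Set.Icc cn dn} ∩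
        {p : ℝ × ℝ × ℝ | Real.sqrt (p.2.1 ^ 2 + p.2.2 ^ 2) ≤ v p.1} := by
    ext ⟨x, y, z⟩
    simp only [Set.mem_setOf_eq, Set.mem_inter_iff]
    constructor
    · rintro ⟨hx, hs⟩
      refine ⟨hx, ?_⟩
      rw [hv]; simp only
      rw [min_eq_right hx.2, max_eq_right hx.1]
      exact hs
    · rintro ⟨hx, hs⟩
      refine ⟨hx, ?_⟩
      rw [hv] at hs; simp only at hs
      rwa [min_eq_right hx.2, max_eq_right hx.1] at hs
  rw [heq]
  apply IsCompact.of_isClosed_subset (isCompact_closedBall (0 : ℝ × ℝ × ℝ) (1 + R))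
  · apply IsClosed.inter
    · exact isClosed_Icc.preimage continuous_fst
    · exact isClosed_le (Real.continuous_sqrt.comp
        (((continuous_fst.comp continuous_snd).pow 2).add
          ((continuous_snd.comp continuous_snd).pow 2))) (hvc.comp continuous_fst)
  · rw [← heq]
    exact aux_body_subset hc hd hR hub

lemma aux_ball_in_body {cn dn : ℝ} {u : ℝ → ℝ} {x0 q : ℝ}
    (hconc : ConcaveOn ℝ (Set.Icc cn dn) u)
    (hx0 : x0 ∈ Set.Icc cn dn) (hux0 : 7/10 ≤ u x0)
    (hq : q ∈ Set.Icc cn dn) (huq : 0 ≤ u q) (hfar : 9/20 ≤ |q - x0|) :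
    ∀ p : ℝ × ℝ × ℝ, dist p ((x0 + q)/2, 0, 0) ≤ 1/10 →
      p ∈ {p : ℝ × ℝ × ℝ | p.1 ∈ Set.Icc cn dn ∧
        Real.sqrt (p.2.1 ^ 2 + p.2.2 ^ 2) ≤ u p.1} := by
  rintro ⟨x, y, z⟩ hdist
  rw [Prod.dist_eq, Prod.dist_eq] at hdist
  simp only [Real.dist_eq] at hdist
  have hxd : |x - (x0 + q)/2| ≤ 1/10 := le_trans (le_max_left _ _) hdist
  have hyd : |y - 0| ≤ 1/10 := le_trans (le_trans (le_max_left _ _) (le_max_right _ _)) hdist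
  have hzd : |z - 0| ≤ 1/10 := le_trans (le_trans (le_max_right _ _) (le_max_right _ _)) hdist
  rw [sub_zero] at hyd hzd
  obtain ⟨hxm, hxu⟩ := aux_interp hconc hx0 hq hux0 huq hfar hxd
  refine ⟨hxm, ?_⟩
  have hy2 : y^2 ≤ 1/100 := by nlinarith [abs_le.1 hyd]
  have hz2 : z^2 ≤ 1/100 := by nlinarith [abs_le.1 hzd]
  have : Real.sqrt (y^2+z^2) ≤ Real.sqrt ((3/20)^2) := Real.sqrt_le_sqrt (by nlinarith)
  rw [Real.sqrt_sq (by norm_num)] at this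
  linarith

end AuxRescaledBodies

section MainRescaledBodies
open Metric Set

/-- Let `ũ_n : I_n → ℝ_{≥0}` be concave functions, vanishing at the endpoints of
`I_n = (c_n, d_n)` with `c_n → −1/2`, `d_n → 1/2`, all bounded above by `R`, and with
`π∫_{I_n} ũ_n² = π`. Then the convex bodies of revolution generated by the `ũ_n` have a
subsequence converging in the Hausdorff metric to a convex body with nonempty interior
(in particular the limit is not a segment). -/
theorem rescaled_bodies_subconverge_to_nondegenerate_convex_body
    (c d : ℕ → ℝ) (un : ℕ → ℝ → ℝ) (R : ℝ) (hR : 0 < R)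
    (hcd : ∀ n, c n < d n)
    (hc : Tendsto c atTop (nhds (-(1 / 2)))) (hd : Tendsto d atTop (nhds (1 / 2)))
    (hconc : ∀ n, ConcaveOn ℝ (Set.Icc (c n) (d n)) (un n))
    (hcont : ∀ n, ContinuousOn (un n) (Set.Icc (c n) (d n)))
    (hnn : ∀ n, ∀ x ∈ Set.Icc (c n) (d n), 0 ≤ un n x)
    (hub : ∀ n, ∀ x ∈ Set.Icc (c n) (d n), un n x ≤ R)
    (hend : ∀ n, un n (c n) = 0 ∧ un n (d n) = 0)
    (hvol : ∀ n, Real.pi * ∫ x in (c n)..(d n), (un n x) ^ 2 = Real.pi) :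
    ∃ (φ : ℕ → ℕ), StrictMono φ ∧
      ∃ L : Set (ℝ × ℝ × ℝ),
        IsCompact L ∧ Convex ℝ L ∧ (interior L).Nonempty ∧
        Tendsto
          (fun k =>
            Metric.hausdorffDist
              {p : ℝ × ℝ × ℝ |
                p.1 ∈ Set.Icc (c (φ k)) (d (φ k)) ∧
                  Real.sqrt (p.2.1 ^ 2 + p.2.2 ^ 2) ≤ un (φ k) p.1}
              L)
          atTop (nhds 0) := by
  classical
  obtain ⟨N₁, hN₁⟩ := Metric.tendsto_atTop.1 hc (1/20) (by norm_num)
  obtain ⟨N₂, hN₂⟩ := Metric.tendsto_atTop.1 hd (1/20) (by norm_num)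
  set N := max N₁ N₂ with hN
  have hbound : ∀ n : ℕ, -(11/20) ≤ c (n+N) ∧ c (n+N) ≤ -(9/20) ∧
      9/20 ≤ d (n+N) ∧ d (n+N) ≤ 11/20 := by
    intro n
    have h1 := hN₁ (n+N) (le_trans (le_max_left _ _) (Nat.le_add_left N n))
    have h2 := hN₂ (n+N) (le_trans (le_max_right _ _) (Nat.le_add_left N n))
    rw [Real.dist_eq] at h1 h2
    obtain ⟨a1, a2⟩ := abs_lt.1 h1
    obtain ⟨b1, b2⟩ := abs_lt.1 h2
    exact ⟨by linarith, by linarith, by linarith, by linarith⟩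
  set K : ℕ → Set (ℝ × ℝ × ℝ) := fun n =>
    {p : ℝ × ℝ × ℝ | p.1 ∈ Set.Icc (c (n+N)) (d (n+N)) ∧
      Real.sqrt (p.2.1 ^ 2 + p.2.2 ^ 2) ≤ un (n+N) p.1} with hKdef
  have hKcompact : ∀ n, IsCompact (K n) := by
    intro n
    exact aux_body_compact (hcd _).le (by linarith [(hbound n).1])
      (by linarith [(hbound n).2.2.2]) hR.le (hcont _) (hub _)
  have hKconvex : ∀ n, Convex ℝ (K n) := fun n => aux_body_convex (hconc _)
  have hKsub : ∀ n, K n ⊆ Metric.closedBall 0 (1+R) := by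
    intro n
    exact aux_body_subset (by linarith [(hbound n).1]) (by linarith [(hbound n).2.2.2])
      hR.le (hub _)
  have hKne : ∀ n, ((c (n+N), 0, 0) : ℝ × ℝ × ℝ) ∈ K n := by
    intro n
    refine ⟨⟨le_refl _, (hcd _).le⟩, ?_⟩
    simp only
    rw [(hend (n+N)).1]
    norm_num
  -- centers
  have hcenter : ∀ n : ℕ, ∃ m : ℝ × ℝ × ℝ, m ∈ Metric.closedBall (0 : ℝ × ℝ × ℝ) 1 ∧
      ∀ p : ℝ × ℝ × ℝ, dist p m ≤ 1/10 → p ∈ K n := by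
    intro n
    obtain ⟨hb1, hb2, hb3, hb4⟩ := hbound n
    have hint : ∫ x in (c (n+N))..(d (n+N)), (un (n+N) x) ^ 2 = 1 :=
      mul_left_cancel₀ Real.pi_ne_zero (by rw [hvol (n+N), mul_one])
    obtain ⟨x0, hx0, hux0⟩ := aux_peak (hcd (n+N)) (by linarith) (hcont _) (hnn _) hint
    rcases le_or_gt (9/20) (d (n+N) - x0) with hside | hside
    · refine ⟨((x0 + d (n+N))/2, 0, 0), ?_, ?_⟩
      · rw [Metric.mem_closedBall, Prod.dist_eq, Prod.dist_eq]
        simp only [Prod.fst_zero, Prod.snd_zero, Real.dist_eq, sub_zero]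
        refine max_le (abs_le.2 ⟨by linarith [hx0.1, hx0.2], by linarith [hx0.1, hx0.2]⟩)
          (max_le (by norm_num) (by norm_num))
      · intro p hp
        refine aux_ball_in_body (hconc _) hx0 hux0 ⟨(hcd _).le, le_refl _⟩
          (le_of_eq (hend _).2.symm) ?_ p hp
        rw [abs_of_nonneg (by linarith)]; exact hside
    · refine ⟨((x0 + c (n+N))/2, 0, 0), ?_, ?_⟩
      · rw [Metric.mem_closedBall, Prod.dist_eq, Prod.dist_eq]
        simp only [Prod.fst_zero, Prod.snd_zero, Real.dist_eq, sub_zero]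
        refine max_le (abs_le.2 ⟨by linarith [hx0.1, hx0.2], by linarith [hx0.1, hx0.2]⟩)
          (max_le (by norm_num) (by norm_num))
      · intro p hp
        refine aux_ball_in_body (hconc _) hx0 hux0 ⟨le_refl _, (hcd _).le⟩
          (le_of_eq (hend _).1.symm) ?_ p hp
        rw [abs_of_nonpos (by linarith [hx0.1])]
        have := hx0.2
        linarith
  choose m hm1 hm2 using hcenter
  -- ambient compact space
  haveI : CompactSpace (Metric.closedBall (0 : ℝ × ℝ × ℝ) (1+R)) :=
    isCompact_iff_compactSpace.1 (isCompact_closedBall 0 (1+R))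
  set X := Metric.closedBall (0 : ℝ × ℝ × ℝ) (1+R) with hX
  have himg : ∀ n, (Subtype.val : X → ℝ × ℝ × ℝ) '' (Subtype.val ⁻¹' K n) = K n := by
    intro n
    rw [Subtype.image_preimage_coe]
    exact Set.inter_eq_right.2 (hKsub n)
  have hSc : ∀ n, IsCompact ((Subtype.val : X → ℝ × ℝ × ℝ) ⁻¹' K n) := by
    intro n
    rw [Topology.IsEmbedding.subtypeVal.isCompact_iff, himg n]
    exact hKcompact n
  set S : ℕ → TopologicalSpace.NonemptyCompacts X := fun n =>
    ⟨⟨Subtype.val ⁻¹' K n, hSc n⟩, ⟨⟨(c (n+N), 0, 0), hKsub n (hKne n)⟩, hKne n⟩⟩ with hSdef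
  obtain ⟨L', φ₀, hφ₀, hconv⟩ := CompactSpace.tendsto_subseq S
  set L : Set (ℝ × ℝ × ℝ) := Subtype.val '' (L' : Set X) with hL
  have hLcompact : IsCompact L := L'.isCompact.image continuous_subtype_val
  have hLne : L.Nonempty := L'.nonempty.image _
  have hdeq : ∀ j, dist (S j) L' = Metric.hausdorffDist (K j) L := by
    intro j
    rw [Metric.NonemptyCompacts.dist_eq,
      ← Metric.hausdorffDist_image isometry_subtype_coe]
    congr 1
    exact (himg j)
  have hD : Tendsto (fun k => Metric.hausdorffDist (K (φ₀ k)) L) atTop (nhds 0) := by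
    have h := tendsto_iff_dist_tendsto_zero.1 hconv
    simpa only [Function.comp, hdeq] using h
  have hfin : ∀ j, EMetric.hausdorffEdist (K j) L ≠ ⊤ := by
    intro j
    exact Metric.hausdorffEdist_ne_top_of_nonempty_of_bounded ⟨_, hKne j⟩ hLne
      (hKcompact j).isBounded hLcompact.isBounded
  -- convexity of L
  have hLconvex : Convex ℝ L := by
    intro p hp q hq a b ha hb hab
    have hpick : ∀ (w : ℝ × ℝ × ℝ), w ∈ L → ∀ k : ℕ, ∃ w' ∈ K (φ₀ k),
        dist w w' ≤ Metric.hausdorffDist (K (φ₀ k)) L := by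
      intro w hw k
      obtain ⟨w', hw', hwd⟩ := (hKcompact (φ₀ k)).exists_infDist_eq_dist ⟨_, hKne (φ₀ k)⟩ w
      refine ⟨w', hw', ?_⟩
      rw [← hwd, Metric.hausdorffDist_comm]
      exact Metric.infDist_le_hausdorffDist_of_mem hw
        (by rw [EMetric.hausdorffEdist_comm]; exact hfin (φ₀ k))
    choose pk hpk hpkd using hpick p hp
    choose qk hqk hqkd using hpick q hq
    have hptend : Tendsto pk atTop (nhds p) := by
      rw [tendsto_iff_dist_tendsto_zero]
      exact squeeze_zero (fun k => dist_nonneg)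
        (fun k => by rw [dist_comm]; exact hpkd k) hD
    have hqtend : Tendsto qk atTop (nhds q) := by
      rw [tendsto_iff_dist_tendsto_zero]
      exact squeeze_zero (fun k => dist_nonneg)
        (fun k => by rw [dist_comm]; exact hqkd k) hD
    have hrtend : Tendsto (fun k => a • pk k + b • qk k) atTop (nhds (a • p + b • q)) :=
      ((hptend.const_smul a).add (hqtend.const_smul b))
    have hrK : ∀ k, a • pk k + b • qk k ∈ K (φ₀ k) :=
      fun k => hKconvex (φ₀ k) (hpk k) (hqk k) ha hb hab
    have h1 : Tendsto (fun k => Metric.infDist (a • pk k + b • qk k) L) atTop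
        (nhds (Metric.infDist (a • p + b • q) L)) :=
      ((Metric.continuous_infDist_pt L).tendsto _).comp hrtend
    have h2 : Tendsto (fun k => Metric.infDist (a • pk k + b • qk k) L) atTop (nhds 0) :=
      squeeze_zero (fun k => Metric.infDist_nonneg)
        (fun k => Metric.infDist_le_hausdorffDist_of_mem (hrK k) (hfin (φ₀ k))) hD
    have h3 : Metric.infDist (a • p + b • q) L = 0 := tendsto_nhds_unique h1 h2
    exact (hLcompact.isClosed.mem_iff_infDist_zero hLne).2 h3
  -- centers subsequence
  obtain ⟨mI, -, φ₁, hφ₁, hmconv⟩ := (isCompact_closedBall (0 : ℝ × ℝ × ℝ) 1).tendsto_subseq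
    (fun k => hm1 (φ₀ k))
  have hD1 : Tendsto (fun k => Metric.hausdorffDist (K (φ₀ (φ₁ k))) L) atTop (nhds 0) :=
    hD.comp hφ₁.tendsto_atTop
  -- ball inside L
  have hball : Metric.ball mI (1/20) ⊆ L := by
    intro w hw
    rw [Metric.mem_ball] at hw
    have hev : ∀ᶠ k in atTop, Metric.infDist w L ≤
        Metric.hausdorffDist (K (φ₀ (φ₁ k))) L := by
      have hmc : Tendsto (fun k => dist (m (φ₀ (φ₁ k))) mI) atTop (nhds 0) :=
        tendsto_iff_dist_tendsto_zero.1 hmconv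
      have h1 : ∀ᶠ k in atTop, dist (m (φ₀ (φ₁ k))) mI < 1/20 - dist w mI := by
        have hpos : (0:ℝ) < 1/20 - dist w mI := by linarith
        exact (hmc.eventually (eventually_lt_nhds hpos)).mono (fun k hk => hk)
      refine h1.mono (fun k hk => ?_)
      have hwK : w ∈ K (φ₀ (φ₁ k)) := by
        apply hm2 (φ₀ (φ₁ k))
        calc dist w (m (φ₀ (φ₁ k))) ≤ dist w mI + dist mI (m (φ₀ (φ₁ k))) := dist_triangle _ _ _
          _ ≤ dist w mI + dist (m (φ₀ (φ₁ k))) mI := by rw [dist_comm mI _]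
          _ ≤ 1/10 := by linarith
      exact Metric.infDist_le_hausdorffDist_of_mem hwK (hfin (φ₀ (φ₁ k)))
    have hle : Metric.infDist w L ≤ 0 := ge_of_tendsto hD1 hev
    have h0 : Metric.infDist w L = 0 := le_antisymm hle Metric.infDist_nonneg
    exact (hLcompact.isClosed.mem_iff_infDist_zero hLne).2 h0
  have hint : (interior L).Nonempty := by
    refine ⟨mI, ?_⟩
    exact mem_interior.2 ⟨Metric.ball mI (1/20), hball, Metric.isOpen_ball,
      Metric.mem_ball_self (by norm_num)⟩
  refine ⟨fun k => φ₀ (φ₁ k) + N, ?_, L, hLcompact, hLconvex, hint, ?_⟩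
  · intro i j hij
    exact Nat.add_lt_add_right (hφ₀ (hφ₁ hij)) N
  · exact hD1

end MainRescaledBodies
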